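/- For every integer l > 1 and all linear functionals φ, λ ∈ M₄(l)*, one has λ(PD(φ)) = −φ(PD(λ)); that is, the bilinear form on M₄(l)* induced by PD is skew-symmetric. -/

import Mathlib

open scoped BigOperators

namespace MW

variable (l : ℕ)

/-- Index type for the basis symbols: `0 ↦ x²`, `1 ↦ xy`, `2 ↦ y²`. -/
abbrev Sym := Fin 3 × ZMod l × ZMod l

/-- The free ℂ-vector space on the symbols. -/
abbrev V := Sym l →₀ ℂ

/-- `gcd(u,v,l) = 1`. -/
def copr (u v : ZMod l) : Prop := Nat.gcd (Nat.gcd (ZMod.val u) (ZMod.val v)) l = 1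

instance (u v : ZMod l) : Decidable (copr l u v) := by unfold copr; infer_instance

noncomputable def X2 (u v : ZMod l) : V l := Finsupp.single (0, u, v) 1
noncomputable def XY (u v : ZMod l) : V l := Finsupp.single (1, u, v) 1
noncomputable def Y2 (u v : ZMod l) : V l := Finsupp.single (2, u, v) 1

/-- The relation subspace: the relations of Merel–Shokurov on coprime symbols,
together with the (dummy) basis vectors at non-coprime indices. -/
noncomputable def Rel : Submodule ℂ (V l) :=
  Submodule.span ℂ
    ({ w | ∃ u v, ¬ copr l u v ∧ (w = X2 l u v ∨ w = XY l u v ∨ w = Y2 l u v) } ∪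
     { w | ∃ u v, copr l u v ∧
        (w = X2 l u v + Y2 l v (-u) ∨
         w = XY l u v - XY l v (-u) ∨
         w = Y2 l u v + X2 l v (-u) ∨
         w = XY l v (-u - v) - XY l (-u - v) u + Y2 l (-u - v) u + X2 l u v - XY l u v) })

/-- The space of weight four modular symbols of level `l`. -/
abbrev M := V l ⧸ Rel l

noncomputable def x2 (u v : ZMod l) : M l := Submodule.Quotient.mk (X2 l u v)
noncomputable def xy (u v : ZMod l) : M l := Submodule.Quotient.mk (XY l u v)
noncomputable def y2 (u v : ZMod l) : M l := Submodule.Quotient.mk (Y2 l u v)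

/-- The class of `p₂·x²(u,v) + p₁·xy(u,v) + p₀·y²(u,v)` in `M l`. -/
noncomputable def pcl (p2 p1 p0 : ℂ) (u v : ZMod l) : M l :=
  p2 • x2 l u v + p1 • xy l u v + p0 • y2 l u v

/-- The Poincaré duality map (as a function on the dual space). -/
noncomputable def PD [NeZero l] (φ : Module.Dual ℂ (M l)) : M l :=
  (24 : ℂ)⁻¹ • ∑ u : ZMod l, ∑ v : ZMod l,
    ( φ (pcl l 1 (-2) 1 (-v) (u + v) - pcl l 1 2 1 v (v - u)) • x2 l u v
      - (2 : ℂ) • φ (pcl l 0 (-1) 1 (-v) (u + v) + pcl l 0 1 1 v (v - u)) • xy l u v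
      + φ (pcl l 0 0 1 (-v) (u + v) - pcl l 0 0 1 v (v - u)) • y2 l u v )

end MW

namespace PDAux

open MW

variable (l : ℕ)

lemma copr_iff [NeZero l] (u v : ZMod l) :
    copr l u v ↔ ∃ s t : ZMod l, s * u + t * v = 1 := by
  constructor
  · intro h
    have h' : IsCoprime ((Nat.gcd u.val v.val : ℕ) : ℤ) ((l : ℕ) : ℤ) :=
      Nat.isCoprime_iff_coprime.mpr h
    obtain ⟨x, y, hxy⟩ := h'
    have e2 : ((Nat.gcd u.val v.val : ℕ) : ℤ)
        = u.val * Nat.gcdA u.val v.val + v.val * Nat.gcdB u.val v.val :=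
      Nat.gcd_eq_gcd_ab _ _
    refine ⟨((x * Nat.gcdA u.val v.val : ℤ) : ZMod l), ((x * Nat.gcdB u.val v.val : ℤ) : ZMod l), ?_⟩
    have hc := congrArg (fun z : ℤ => ((z : ℤ) : ZMod l)) hxy
    rw [e2] at hc
    push_cast at hc
    rw [ZMod.natCast_self] at hc
    rw [ZMod.natCast_val, ZMod.natCast_val, ZMod.cast_id, ZMod.cast_id] at hc
    push_cast
    linear_combination hc
  · rintro ⟨s, t, hst⟩
    have key : ((s.val * u.val + t.val * v.val : ℕ) : ZMod l) = ((1 : ℕ) : ZMod l) := by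
      push_cast
      rw [ZMod.natCast_val, ZMod.natCast_val, ZMod.natCast_val, ZMod.natCast_val,
        ZMod.cast_id, ZMod.cast_id, ZMod.cast_id, ZMod.cast_id]
      linear_combination hst
    have hmod : (s.val * u.val + t.val * v.val) ≡ 1 [MOD l] :=
      (ZMod.natCast_eq_natCast_iff _ _ _).mp key
    obtain ⟨k, hk⟩ := hmod.dvd
    have hdl : ((Nat.gcd (Nat.gcd u.val v.val) l : ℕ) : ℤ) ∣ (l : ℤ) :=
      Int.natCast_dvd_natCast.mpr (Nat.gcd_dvd_right _ _)
    have hdu : ((Nat.gcd (Nat.gcd u.val v.val) l : ℕ) : ℤ) ∣ (u.val : ℤ) :=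
      Int.natCast_dvd_natCast.mpr ((Nat.gcd_dvd_left _ _).trans (Nat.gcd_dvd_left _ _))
    have hdv : ((Nat.gcd (Nat.gcd u.val v.val) l : ℕ) : ℤ) ∣ (v.val : ℤ) :=
      Int.natCast_dvd_natCast.mpr ((Nat.gcd_dvd_left _ _).trans (Nat.gcd_dvd_right _ _))
    have hone : ((Nat.gcd (Nat.gcd u.val v.val) l : ℕ) : ℤ) ∣ (1 : ℤ) := by
      have h1 : (1 : ℤ) = (l : ℤ) * k + (s.val : ℤ) * (u.val : ℤ) + (t.val : ℤ) * (v.val : ℤ) := by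
        push_cast at hk ⊢
        linear_combination hk
      rw [h1]
      exact dvd_add (dvd_add (hdl.mul_right k) (hdu.mul_left _)) (hdv.mul_left _)
    have : Nat.gcd (Nat.gcd u.val v.val) l ∣ 1 := by exact_mod_cast hone
    exact Nat.dvd_one.mp this

lemma copr_of_S [NeZero l] {u v : ZMod l} (h : copr l v (-u)) : copr l u v := by
  rw [copr_iff] at h ⊢
  obtain ⟨s, t, h⟩ := h
  exact ⟨-t, s, by linear_combination h⟩

lemma copr_of_P [NeZero l] {u v : ZMod l} (h : copr l v (-u - v)) : copr l u v := by
  rw [copr_iff] at h ⊢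
  obtain ⟨s, t, h⟩ := h
  exact ⟨-t, s - t, by linear_combination h⟩

lemma copr_of_U [NeZero l] {u v : ZMod l} (h : copr l (-u - v) u) : copr l u v := by
  rw [copr_iff] at h ⊢
  obtain ⟨s, t, h⟩ := h
  exact ⟨t - s, -s, by linear_combination h⟩

lemma x2_eq_zero {u v : ZMod l} (h : ¬ copr l u v) : x2 l u v = 0 := by
  rw [x2, Submodule.Quotient.mk_eq_zero]
  exact Submodule.subset_span (Or.inl ⟨u, v, h, Or.inl rfl⟩)

lemma xy_eq_zero {u v : ZMod l} (h : ¬ copr l u v) : xy l u v = 0 := by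
  rw [xy, Submodule.Quotient.mk_eq_zero]
  exact Submodule.subset_span (Or.inl ⟨u, v, h, Or.inr (Or.inl rfl)⟩)

lemma y2_eq_zero {u v : ZMod l} (h : ¬ copr l u v) : y2 l u v = 0 := by
  rw [y2, Submodule.Quotient.mk_eq_zero]
  exact Submodule.subset_span (Or.inl ⟨u, v, h, Or.inr (Or.inr rfl)⟩)

variable [NeZero l] (ψ : Module.Dual ℂ (M l))

lemma hrel1 (u v : ZMod l) : ψ (x2 l u v) + ψ (y2 l v (-u)) = 0 := by
  by_cases h : copr l u v
  · have h0 : x2 l u v + y2 l v (-u) = 0 := by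
      rw [x2, y2, ← Submodule.Quotient.mk_add, Submodule.Quotient.mk_eq_zero]
      exact Submodule.subset_span (Or.inr ⟨u, v, h, Or.inl rfl⟩)
    simpa only [map_add, map_zero] using congrArg ψ h0
  · rw [x2_eq_zero l h, y2_eq_zero l (fun hc => h (copr_of_S l hc))]
    simp

lemma hrel2 (u v : ZMod l) : ψ (xy l u v) - ψ (xy l v (-u)) = 0 := by
  by_cases h : copr l u v
  · have h0 : xy l u v - xy l v (-u) = 0 := by
      rw [xy, xy, ← Submodule.Quotient.mk_sub, Submodule.Quotient.mk_eq_zero]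
      exact Submodule.subset_span (Or.inr ⟨u, v, h, Or.inr (Or.inl rfl)⟩)
    simpa only [map_sub, map_zero] using congrArg ψ h0
  · rw [xy_eq_zero l h, xy_eq_zero l (fun hc => h (copr_of_S l hc))]
    simp

lemma hrel3 (u v : ZMod l) : ψ (y2 l u v) + ψ (x2 l v (-u)) = 0 := by
  by_cases h : copr l u v
  · have h0 : y2 l u v + x2 l v (-u) = 0 := by
      rw [y2, x2, ← Submodule.Quotient.mk_add, Submodule.Quotient.mk_eq_zero]
      exact Submodule.subset_span (Or.inr ⟨u, v, h, Or.inr (Or.inr (Or.inl rfl))⟩)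
    simpa only [map_add, map_zero] using congrArg ψ h0
  · rw [y2_eq_zero l h, x2_eq_zero l (fun hc => h (copr_of_S l hc))]
    simp

lemma hrel4 (u v : ZMod l) :
    ψ (xy l v (-u - v)) - ψ (xy l (-u - v) u) + ψ (y2 l (-u - v) u)
      + ψ (x2 l u v) - ψ (xy l u v) = 0 := by
  by_cases h : copr l u v
  · have h0 : xy l v (-u - v) - xy l (-u - v) u + y2 l (-u - v) u + x2 l u v - xy l u v = 0 := by
      rw [xy, xy, y2, x2, xy, ← Submodule.Quotient.mk_sub, ← Submodule.Quotient.mk_add,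
        ← Submodule.Quotient.mk_add, ← Submodule.Quotient.mk_sub, Submodule.Quotient.mk_eq_zero]
      exact Submodule.subset_span (Or.inr ⟨u, v, h, Or.inr (Or.inr (Or.inr rfl))⟩)
    simpa only [map_sub, map_add, map_zero] using congrArg ψ h0
  · rw [xy_eq_zero l (fun hc => h (copr_of_P l hc)), xy_eq_zero l (fun hc => h (copr_of_U l hc)),
      y2_eq_zero l (fun hc => h (copr_of_U l hc)), x2_eq_zero l h, xy_eq_zero l h]
    simp

/-- The reindexing `(u,v) ↦ (-v, u+v)`. -/
def sigE : (ZMod l × ZMod l) ≃ (ZMod l × ZMod l) :=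
  ⟨fun p => (-p.2, p.1 + p.2), fun p => (p.1 + p.2, -p.1),
    fun p => by obtain ⟨a, b⟩ := p; simp only [Prod.mk.injEq]; constructor <;> ring,
    fun p => by obtain ⟨a, b⟩ := p; simp only [Prod.mk.injEq]; constructor <;> ring⟩

/-- The reindexing `(u,v) ↦ (v, v-u)`. -/
def tauE : (ZMod l × ZMod l) ≃ (ZMod l × ZMod l) :=
  ⟨fun p => (p.2, p.2 - p.1), fun p => (p.1 - p.2, p.1),
    fun p => by obtain ⟨a, b⟩ := p; simp only [Prod.mk.injEq, and_true, true_and]; ring,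
    fun p => by obtain ⟨a, b⟩ := p; simp only [Prod.mk.injEq, and_true, true_and]; ring⟩

lemma pointwise (F G H A B C : ZMod l → ZMod l → ℂ)
    (h1 : ∀ u v, A u v + C v (-u) = 0)
    (h2 : ∀ u v, B u v - B v (-u) = 0)
    (h3 : ∀ u v, C u v + A v (-u) = 0)
    (h4 : ∀ u v, B v (-u - v) - B (-u - v) u + C (-u - v) u + A u v - B u v = 0)
    (u v : ZMod l) :
    ((F u v - 2*G u v + H u v) * A (u+v) (-u)
        + (2*G u v - 2*H u v) * B (u+v) (-u) + H u v * C (u+v) (-u))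
      + (-(F u v + 2*G u v + H u v) * A (u-v) u
        - (2*G u v + 2*H u v) * B (u-v) u - H u v * C (u-v) u)
      + ((A (-v) (u+v) - 2*B (-v) (u+v) + C (-v) (u+v)
          - (A v (v-u) + 2*B v (v-u) + C v (v-u))) * F u v
        - 2*((-B (-v) (u+v) + C (-v) (u+v)) + (B v (v-u) + C v (v-u))) * G u v
        + (C (-v) (u+v) - C v (v-u)) * H u v) = 0 := by
  linear_combination (norm := ring_nf)     ((1:ℂ) * F u v + (2:ℂ) * G u v + (1:ℂ) * H u v) * h1 (-u + v) (-u) +     ((1:ℂ) * F u v + (-2:ℂ) * G u v + (1:ℂ) * H u v) * h1 (-u - v) (-v) +     ((-1:ℂ) * H u v) * h1 (-u) (u - v) +     ((2:ℂ) * G u v + (1:ℂ) * H u v) * h1 (-v) (u - v) +     ((-1:ℂ) * F u v + (2:ℂ) * G u v + (-1:ℂ) * H u v) * h1 (-v) u +     ((1:ℂ) * F u v + (-2:ℂ) * G u v + (1:ℂ) * H u v) * h1 (u + v) (-u) +     ((-1:ℂ) * F u v) * h1 v (-u + v) +     ((-1:ℂ) * F u v + (2:ℂ) * G u v + (-1:ℂ)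 * H u v) * h1 v (-u - v) +     ((2:ℂ) * G u v + (1:ℂ) * H u v) * h1 v (-u) +     ((2:ℂ) * G u v + (2:ℂ) * H u v) * h2 (-u + v) (-v) +     ((2:ℂ) * F u v + (-4:ℂ) * G u v + (2:ℂ) * H u v) * h2 (-u - v) (-v) +     ((2:ℂ) * G u v + (2:ℂ) * H u v) * h2 (-u) (u - v) +     ((2:ℂ) * G u v + (2:ℂ) * H u v) * h2 (-v) (u - v) +     ((-2:ℂ) * F u v + (-2:ℂ) * G u v) * h2 v (-u + v) +     ((2:ℂ) * F u v + (-4:ℂ) * G u v + (2:ℂ) * H u v) * h2 v (-u - v) +     ((-2:ℂ) * G u v) * h2 v (-u) +     ((-2:ℂ) * G u v + (-1:ℂ) * H u v) * h3 (-u + v) (-v) +     ((1:ℂ) * F u v + (-2:ℂ) * G u v + (1:ℂ) * H u v) * h3 (-u - v) (-v) +     ((-1:ℂ) * F u v + (2:ℂ) * G u v + (-1:ℂ) * H u v) * h3 (-u) (-u - v) +     ((-4:ℂ) * G u v) * h3 (-u) (-v) +     ((-1:ℂ) * F u v + (-2:ℂ) * G u v + (-1:ℂ) * H u v) * h3 (-u)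 (u - v) +     ((-1:ℂ) * F u v + (-2:ℂ) * G u v + (-1:ℂ) * H u v) * h3 u (-u + v) +     ((-1:ℂ) * F u v + (-2:ℂ) * G u v + (-1:ℂ) * H u v) * h3 v (-u + v) +     ((-1:ℂ) * F u v + (2:ℂ) * G u v + (-1:ℂ) * H u v) * h3 v (-u - v) +     ((-1:ℂ) * H u v) * h3 v (-u) +     ((1:ℂ) * F u v + (2:ℂ) * G u v + (1:ℂ) * H u v) * h4 (-u + v) (-v) +     ((1:ℂ) * F u v + (-2:ℂ) * G u v + (1:ℂ) * H u v) * h4 (-u - v) u +     ((1:ℂ) * H u v) * h4 (-u) (-v) +     ((1:ℂ) * H u v) * h4 (-u) (u - v) +     ((2:ℂ) * G u v + (-1:ℂ) * H u v) * h4 (-v) (u + v) +     ((1:ℂ) * F u v + (2:ℂ) * G u v + (1:ℂ) * H u v) * h4 (-v) u +     ((1:ℂ) * F u v + (-2:ℂ) * G u v + (1:ℂ) * H u v) * h4 v (-u - v) +     ((-2:ℂ) * G u v + (-1:ℂ) * H u v) * h4 v (-u) 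

lemma key (F G H A B C : ZMod l → ZMod l → ℂ)
    (h1 : ∀ u v, A u v + C v (-u) = 0)
    (h2 : ∀ u v, B u v - B v (-u) = 0)
    (h3 : ∀ u v, C u v + A v (-u) = 0)
    (h4 : ∀ u v, B v (-u - v) - B (-u - v) u + C (-u - v) u + A u v - B u v = 0) :
    (∑ u : ZMod l, ∑ v : ZMod l,
      ((F (-v) (u+v) - 2*G (-v) (u+v) + H (-v) (u+v)
          - (F v (v-u) + 2*G v (v-u) + H v (v-u))) * A u v
        - 2*((-G (-v) (u+v) + H (-v) (u+v)) + (G v (v-u) + H v (v-u))) * B u v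
        + (H (-v) (u+v) - H v (v-u)) * C u v))
    + (∑ u : ZMod l, ∑ v : ZMod l,
      ((A (-v) (u+v) - 2*B (-v) (u+v) + C (-v) (u+v)
          - (A v (v-u) + 2*B v (v-u) + C v (v-u))) * F u v
        - 2*((-B (-v) (u+v) + C (-v) (u+v)) + (B v (v-u) + C v (v-u))) * G u v
        + (C (-v) (u+v) - C v (v-u)) * H u v)) = 0 := by
  have e1 : (∑ u : ZMod l, ∑ v : ZMod l,
      ((F (-v) (u+v) - 2*G (-v) (u+v) + H (-v) (u+v)
          - (F v (v-u) + 2*G v (v-u) + H v (v-u))) * A u v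
        - 2*((-G (-v) (u+v) + H (-v) (u+v)) + (G v (v-u) + H v (v-u))) * B u v
        + (H (-v) (u+v) - H v (v-u)) * C u v))
      = ∑ p : ZMod l × ZMod l,
      ((F (-p.2) (p.1+p.2) - 2*G (-p.2) (p.1+p.2) + H (-p.2) (p.1+p.2)
          - (F p.2 (p.2-p.1) + 2*G p.2 (p.2-p.1) + H p.2 (p.2-p.1))) * A p.1 p.2
        - 2*((-G (-p.2) (p.1+p.2) + H (-p.2) (p.1+p.2))
          + (G p.2 (p.2-p.1) + H p.2 (p.2-p.1))) * B p.1 p.2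
        + (H (-p.2) (p.1+p.2) - H p.2 (p.2-p.1)) * C p.1 p.2) :=
    (Fintype.sum_prod_type' _).symm
  have e2 : (∑ u : ZMod l, ∑ v : ZMod l,
      ((A (-v) (u+v) - 2*B (-v) (u+v) + C (-v) (u+v)
          - (A v (v-u) + 2*B v (v-u) + C v (v-u))) * F u v
        - 2*((-B (-v) (u+v) + C (-v) (u+v)) + (B v (v-u) + C v (v-u))) * G u v
        + (C (-v) (u+v) - C v (v-u)) * H u v))
      = ∑ p : ZMod l × ZMod l,
      ((A (-p.2) (p.1+p.2) - 2*B (-p.2) (p.1+p.2) + C (-p.2) (p.1+p.2)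
          - (A p.2 (p.2-p.1) + 2*B p.2 (p.2-p.1) + C p.2 (p.2-p.1))) * F p.1 p.2
        - 2*((-B (-p.2) (p.1+p.2) + C (-p.2) (p.1+p.2))
          + (B p.2 (p.2-p.1) + C p.2 (p.2-p.1))) * G p.1 p.2
        + (C (-p.2) (p.1+p.2) - C p.2 (p.2-p.1)) * H p.1 p.2) :=
    (Fintype.sum_prod_type' _).symm
  rw [e1, e2]
  have hsplit : (∑ p : ZMod l × ZMod l,
      ((F (-p.2) (p.1+p.2) - 2*G (-p.2) (p.1+p.2) + H (-p.2) (p.1+p.2)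
          - (F p.2 (p.2-p.1) + 2*G p.2 (p.2-p.1) + H p.2 (p.2-p.1))) * A p.1 p.2
        - 2*((-G (-p.2) (p.1+p.2) + H (-p.2) (p.1+p.2))
          + (G p.2 (p.2-p.1) + H p.2 (p.2-p.1))) * B p.1 p.2
        + (H (-p.2) (p.1+p.2) - H p.2 (p.2-p.1)) * C p.1 p.2))
      = (∑ p : ZMod l × ZMod l,
        ((F (-p.2) (p.1+p.2) - 2*G (-p.2) (p.1+p.2) + H (-p.2) (p.1+p.2)) * A p.1 p.2
          + (2*G (-p.2) (p.1+p.2) - 2*H (-p.2) (p.1+p.2)) * B p.1 p.2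
          + H (-p.2) (p.1+p.2) * C p.1 p.2))
      + (∑ p : ZMod l × ZMod l,
        (-(F p.2 (p.2-p.1) + 2*G p.2 (p.2-p.1) + H p.2 (p.2-p.1)) * A p.1 p.2
          - (2*G p.2 (p.2-p.1) + 2*H p.2 (p.2-p.1)) * B p.1 p.2
          - H p.2 (p.2-p.1) * C p.1 p.2)) := by
    rw [← Finset.sum_add_distrib]
    exact Finset.sum_congr rfl fun p _ => by ring
  have hT1 : (∑ p : ZMod l × ZMod l,
        ((F (-p.2) (p.1+p.2) - 2*G (-p.2) (p.1+p.2) + H (-p.2) (p.1+p.2)) * A p.1 p.2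
          + (2*G (-p.2) (p.1+p.2) - 2*H (-p.2) (p.1+p.2)) * B p.1 p.2
          + H (-p.2) (p.1+p.2) * C p.1 p.2))
      = ∑ q : ZMod l × ZMod l,
        ((F q.1 q.2 - 2*G q.1 q.2 + H q.1 q.2) * A (q.1+q.2) (-q.1)
          + (2*G q.1 q.2 - 2*H q.1 q.2) * B (q.1+q.2) (-q.1)
          + H q.1 q.2 * C (q.1+q.2) (-q.1)) := by
    apply Fintype.sum_equiv (sigE l)
    intro p
    simp only [sigE, Equiv.coe_fn_mk]
    ring_nf
  have hT2 : (∑ p : ZMod l × ZMod l,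
        (-(F p.2 (p.2-p.1) + 2*G p.2 (p.2-p.1) + H p.2 (p.2-p.1)) * A p.1 p.2
          - (2*G p.2 (p.2-p.1) + 2*H p.2 (p.2-p.1)) * B p.1 p.2
          - H p.2 (p.2-p.1) * C p.1 p.2))
      = ∑ q : ZMod l × ZMod l,
        (-(F q.1 q.2 + 2*G q.1 q.2 + H q.1 q.2) * A (q.1-q.2) q.1
          - (2*G q.1 q.2 + 2*H q.1 q.2) * B (q.1-q.2) q.1
          - H q.1 q.2 * C (q.1-q.2) q.1) := by
    apply Fintype.sum_equiv (tauE l)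
    intro p
    simp only [tauE, Equiv.coe_fn_mk]
    ring_nf
  have h3sum : (∑ q : ZMod l × ZMod l,
        ((F q.1 q.2 - 2*G q.1 q.2 + H q.1 q.2) * A (q.1+q.2) (-q.1)
          + (2*G q.1 q.2 - 2*H q.1 q.2) * B (q.1+q.2) (-q.1)
          + H q.1 q.2 * C (q.1+q.2) (-q.1)))
      + (∑ q : ZMod l × ZMod l,
        (-(F q.1 q.2 + 2*G q.1 q.2 + H q.1 q.2) * A (q.1-q.2) q.1
          - (2*G q.1 q.2 + 2*H q.1 q.2) * B (q.1-q.2) q.1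
          - H q.1 q.2 * C (q.1-q.2) q.1))
      + (∑ p : ZMod l × ZMod l,
      ((A (-p.2) (p.1+p.2) - 2*B (-p.2) (p.1+p.2) + C (-p.2) (p.1+p.2)
          - (A p.2 (p.2-p.1) + 2*B p.2 (p.2-p.1) + C p.2 (p.2-p.1))) * F p.1 p.2
        - 2*((-B (-p.2) (p.1+p.2) + C (-p.2) (p.1+p.2))
          + (B p.2 (p.2-p.1) + C p.2 (p.2-p.1))) * G p.1 p.2
        + (C (-p.2) (p.1+p.2) - C p.2 (p.2-p.1)) * H p.1 p.2)) = 0 := by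
    rw [← Finset.sum_add_distrib, ← Finset.sum_add_distrib]
    refine Finset.sum_eq_zero fun q _ => ?_
    have hp := pointwise l F G H A B C h1 h2 h3 h4 q.1 q.2
    linear_combination hp
  linear_combination hsplit + hT1 + hT2 + h3sum

end PDAux

theorem stmt4 (l : ℕ) (hl : 1 < l) [NeZero l] (φ lam : Module.Dual ℂ (MW.M l)) :
    lam (MW.PD l φ) = - φ (MW.PD l lam) := by
  have hx : lam (MW.PD l φ) = (24:ℂ)⁻¹ * ∑ u : ZMod l, ∑ v : ZMod l,
      ((φ (MW.x2 l (-v) (u+v)) - 2*φ (MW.xy l (-v) (u+v)) + φ (MW.y2 l (-v) (u+v))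
          - (φ (MW.x2 l v (v-u)) + 2*φ (MW.xy l v (v-u)) + φ (MW.y2 l v (v-u)))) * lam (MW.x2 l u v)
        - 2*((-φ (MW.xy l (-v) (u+v)) + φ (MW.y2 l (-v) (u+v)))
          + (φ (MW.xy l v (v-u)) + φ (MW.y2 l v (v-u)))) * lam (MW.xy l u v)
        + (φ (MW.y2 l (-v) (u+v)) - φ (MW.y2 l v (v-u))) * lam (MW.y2 l u v)) := by
    rw [MW.PD, map_smul, smul_eq_mul]
    congr 1
    rw [map_sum]
    refine Finset.sum_congr rfl fun u _ => ?_
    rw [map_sum]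
    refine Finset.sum_congr rfl fun v _ => ?_
    simp only [MW.pcl, map_add, map_sub, map_smul, smul_eq_mul]
    ring
  have hy : φ (MW.PD l lam) = (24:ℂ)⁻¹ * ∑ u : ZMod l, ∑ v : ZMod l,
      ((lam (MW.x2 l (-v) (u+v)) - 2*lam (MW.xy l (-v) (u+v)) + lam (MW.y2 l (-v) (u+v))
          - (lam (MW.x2 l v (v-u)) + 2*lam (MW.xy l v (v-u)) + lam (MW.y2 l v (v-u)))) * φ (MW.x2 l u v)
        - 2*((-lam (MW.xy l (-v) (u+v)) + lam (MW.y2 l (-v) (u+v)))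
          + (lam (MW.xy l v (v-u)) + lam (MW.y2 l v (v-u)))) * φ (MW.xy l u v)
        + (lam (MW.y2 l (-v) (u+v)) - lam (MW.y2 l v (v-u))) * φ (MW.y2 l u v)) := by
    rw [MW.PD, map_smul, smul_eq_mul]
    congr 1
    rw [map_sum]
    refine Finset.sum_congr rfl fun u _ => ?_
    rw [map_sum]
    refine Finset.sum_congr rfl fun v _ => ?_
    simp only [MW.pcl, map_add, map_sub, map_smul, smul_eq_mul]
    ring
  have hkey : (∑ u : ZMod l, ∑ v : ZMod l,
      ((φ (MW.x2 l (-v) (u+v)) - 2*φ (MW.xy l (-v) (u+v)) + φ (MW.y2 l (-v) (u+v))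
          - (φ (MW.x2 l v (v-u)) + 2*φ (MW.xy l v (v-u)) + φ (MW.y2 l v (v-u)))) * lam (MW.x2 l u v)
        - 2*((-φ (MW.xy l (-v) (u+v)) + φ (MW.y2 l (-v) (u+v)))
          + (φ (MW.xy l v (v-u)) + φ (MW.y2 l v (v-u)))) * lam (MW.xy l u v)
        + (φ (MW.y2 l (-v) (u+v)) - φ (MW.y2 l v (v-u))) * lam (MW.y2 l u v)))
    + (∑ u : ZMod l, ∑ v : ZMod l,
      ((lam (MW.x2 l (-v) (u+v)) - 2*lam (MW.xy l (-v) (u+v)) + lam (MW.y2 l (-v) (u+v))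
          - (lam (MW.x2 l v (v-u)) + 2*lam (MW.xy l v (v-u)) + lam (MW.y2 l v (v-u)))) * φ (MW.x2 l u v)
        - 2*((-lam (MW.xy l (-v) (u+v)) + lam (MW.y2 l (-v) (u+v)))
          + (lam (MW.xy l v (v-u)) + lam (MW.y2 l v (v-u)))) * φ (MW.xy l u v)
        + (lam (MW.y2 l (-v) (u+v)) - lam (MW.y2 l v (v-u))) * φ (MW.y2 l u v))) = 0 :=
    PDAux.key l (fun u v => φ (MW.x2 l u v)) (fun u v => φ (MW.xy l u v))
      (fun u v => φ (MW.y2 l u v)) (fun u v => lam (MW.x2 l u v))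
      (fun u v => lam (MW.xy l u v)) (fun u v => lam (MW.y2 l u v))
      (PDAux.hrel1 l lam) (PDAux.hrel2 l lam) (PDAux.hrel3 l lam) (PDAux.hrel4 l lam)
  linear_combination hx + hy + (24:ℂ)⁻¹ * hkey
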